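/- arXiv:2604.05246 — 2 statements merged into one kernel-verified Lean document; each statement's English description precedes it below -/
import Mathlib

section
/- Transitivity of lifted preorders: if R : A → A → Prop is transitive and the R-lifting holds between (a, p) and (b, q) and between (b, q) and (c, r), then the R-lifting holds between (a, p) and (c, r). -/
open scoped NNReal

theorem lifting_trans {I J K : Type*} [Fintype I] [Fintype J] [Fintype K]
    {A : Type*} (R : A → A → Prop) (hR : Transitive R)
    (a : I → A) (b : J → A) (c : K → A)
    (p : I → ℝ≥0) (q : J → ℝ≥0) (r : K → ℝ≥0)
    (h₁ : ∃ C : I → J → ℝ≥0,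
      (∀ i, ∑ j, C i j = p i) ∧ (∀ j, ∑ i, C i j = q j) ∧
      (∀ i j, 0 < C i j → R (a i) (b j)))
    (h₂ : ∃ D : J → K → ℝ≥0,
      (∀ j, ∑ k, D j k = q j) ∧ (∀ k, ∑ j, D j k = r k) ∧
      (∀ j k, 0 < D j k → R (b j) (c k))) :
    ∃ E : I → K → ℝ≥0,
      (∀ i, ∑ k, E i k = p i) ∧ (∀ k, ∑ i, E i k = r k) ∧
      (∀ i k, 0 < E i k → R (a i) (c k)) := by
  obtain ⟨C, hCrow, hCcol, hCR⟩ := h₁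
  obtain ⟨D, hDrow, hDcol, hDR⟩ := h₂
  -- if q j = 0 then C i j = 0 and D j k = 0
  have hC0 : ∀ i j, q j = 0 → C i j = 0 := by
    intro i j hq
    have : C i j ≤ ∑ i', C i' j := Finset.single_le_sum (f := fun i' => C i' j) (fun _ _ => zero_le) (Finset.mem_univ i)
    simpa [hCcol j, hq, le_zero_iff] using this
  have hD0 : ∀ j k, q j = 0 → D j k = 0 := by
    intro j k hq
    have : D j k ≤ ∑ k', D j k' := Finset.single_le_sum (f := fun k' => D j k') (fun _ _ => zero_le) (Finset.mem_univ k)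
    simpa [hDrow j, hq, le_zero_iff] using this
  refine ⟨fun i k => ∑ j, C i j * D j k / q j, ?_, ?_, ?_⟩
  · intro i
    rw [Finset.sum_comm]
    rw [← hCrow i]
    refine Finset.sum_congr rfl fun j _ => ?_
    rcases eq_or_ne (q j) 0 with hq | hq
    · simp [hC0 i j hq]
    · rw [← Finset.sum_div, ← Finset.mul_sum, hDrow j, mul_div_assoc, div_self hq, mul_one]
  · intro k
    rw [← hDcol k]
    refine Finset.sum_comm.trans (Finset.sum_congr rfl fun j _ => ?_)
    rcases eq_or_ne (q j) 0 with hq | hq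
    · simp [hD0 j k hq]
    · simp_rw [fun i => mul_comm (C i j) (D j k), mul_div_assoc]
      rw [← Finset.mul_sum, ← Finset.sum_div, hCcol j, div_self hq, mul_one]
  · intro i k hpos
    obtain ⟨j, -, hj⟩ := Finset.exists_lt_of_sum_lt (f := fun _ => (0:ℝ≥0)) (by simpa using hpos)
    have hj' : 0 < C i j * D j k := by
      by_contra h
      rw [not_lt, le_zero_iff] at h
      simp [div_eq_zero_iff, h] at hj
    have h1 : C i j ≠ 0 := fun h => by simp [h] at hj'
    have h2 : D j k ≠ 0 := fun h => by simp [h] at hj'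
    exact hR (hCR i j (h1.bot_lt)) (hDR j k (h2.bot_lt))
end

section
/- Strassen's theorem for finite distributions: assume ∑_i p i = ∑_j q j = 1. Then there exists a coupling C between p and q witnessing the R-lifting between (a : I → A, p) and (b : J → B, q) if and only if for every subset S of I, ∑_{i ∈ S} p i ≤ ∑_{j ∈ R[S]} q j, where R[S] = { j | ∃ i ∈ S, R (a i) (b j) }. -/
open scoped NNReal
open Finset

open Classical in
lemma strassen_nat {I J : Type*} [Fintype I] [Fintype J] {A B : Type*}
    (R : A → B → Prop) (a : I → A) (b : J → B)
    (m : I → ℕ) (k : J → ℕ)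
    (hall : ∀ S : Finset I, ∑ i ∈ S, m i ≤
      ∑ j ∈ Finset.univ.filter (fun j => ∃ i ∈ S, R (a i) (b j)), k j) :
    ∃ c : I → J → ℕ, (∀ i, ∑ j, c i j = m i) ∧ (∀ j, ∑ i, c i j ≤ k j) ∧
      (∀ i j, 0 < c i j → R (a i) (b j)) := by
  classical
  set ι := Σ i : I, Fin (m i)
  set α := Σ j : J, Fin (k j)
  set t : ι → Finset α := fun x => univ.filter (fun y => R (a x.1) (b y.1)) with ht
  obtain ⟨f, hfinj, hft⟩ :
      ∃ f : ι → α, Function.Injective f ∧ ∀ x, f x ∈ t x := by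
    rw [← Finset.all_card_le_biUnion_card_iff_exists_injective]
    intro s
    set S := s.image Sigma.fst with hS
    have h1 : s ⊆ S.sigma (fun i => (univ : Finset (Fin (m i)))) := by
      intro x hx
      refine Finset.mem_sigma.2 ⟨?_, Finset.mem_univ _⟩
      exact Finset.mem_image.2 ⟨x, hx, rfl⟩
    have hcard1 : #s ≤ ∑ i ∈ S, m i := by
      calc #s ≤ #(S.sigma (fun i => (univ : Finset (Fin (m i))))) := card_le_card h1
        _ = ∑ i ∈ S, m i := by simp [Finset.card_sigma]
    have h2 : ((univ.filter (fun j => ∃ i ∈ S, R (a i) (b j)))).sigma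
        (fun j => (univ : Finset (Fin (k j)))) ⊆ s.biUnion t := by
      intro y hy
      simp only [Finset.mem_sigma, Finset.mem_filter, Finset.mem_univ, true_and] at hy
      obtain ⟨i, hiS, hR⟩ := hy.1
      rw [hS, Finset.mem_image] at hiS
      obtain ⟨x, hxs, hx1⟩ := hiS
      refine Finset.mem_biUnion.2 ⟨x, hxs, ?_⟩
      simp [ht, hx1, hR]
    have hcard2 : ∑ j ∈ univ.filter (fun j => ∃ i ∈ S, R (a i) (b j)), k j ≤
        #(s.biUnion t) := by
      calc ∑ j ∈ univ.filter (fun j => ∃ i ∈ S, R (a i) (b j)), k j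
          = #(((univ.filter (fun j => ∃ i ∈ S, R (a i) (b j)))).sigma
              (fun j => (univ : Finset (Fin (k j))))) := by simp [Finset.card_sigma]
        _ ≤ #(s.biUnion t) := card_le_card h2
    exact hcard1.trans ((hall S).trans hcard2)
  refine ⟨fun i j => #(univ.filter (fun x : ι => x.1 = i ∧ (f x).1 = j)), ?_, ?_, ?_⟩
  · intro i
    have fib : (univ.filter (fun x : ι => x.1 = i)).card = m i := by
      have : (univ.filter (fun x : ι => x.1 = i)) =
          ({i} : Finset I).sigma (fun i' => (univ : Finset (Fin (m i')))) := by
        ext x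
        rw [Finset.mem_filter, Finset.mem_sigma]
        simp
      rw [this, Finset.card_sigma, Finset.sum_singleton, Finset.card_univ, Fintype.card_fin]
    rw [← fib]
    rw [Finset.card_eq_sum_card_fiberwise (f := fun x : ι => (f x).1)
      (t := (univ : Finset J)) (fun x _ => Finset.mem_univ _)]
    refine Finset.sum_congr rfl fun j _ => ?_
    rw [Finset.filter_filter]
  · intro j
    have fib : (univ.filter (fun y : α => y.1 = j)).card = k j := by
      have : (univ.filter (fun y : α => y.1 = j)) =
          ({j} : Finset J).sigma (fun j' => (univ : Finset (Fin (k j')))) := by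
        ext y
        rw [Finset.mem_filter, Finset.mem_sigma]
        simp
      rw [this, Finset.card_sigma, Finset.sum_singleton, Finset.card_univ, Fintype.card_fin]
    have key : (univ.filter (fun x : ι => (f x).1 = j)).card ≤ k j := by
      rw [← fib]
      apply Finset.card_le_card_of_injOn f
      · intro x hx; simp only [Finset.coe_filter, Set.mem_setOf_eq, Finset.mem_coe, Finset.mem_filter, Finset.mem_univ, true_and] at hx ⊢; exact hx
      · exact hfinj.injOn
    calc ∑ i, #(univ.filter (fun x : ι => x.1 = i ∧ (f x).1 = j))
        = (univ.filter (fun x : ι => (f x).1 = j)).card := by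
          rw [Finset.card_eq_sum_card_fiberwise (f := fun x : ι => x.1)
            (t := (univ : Finset I)) (fun x _ => Finset.mem_univ _)]
          refine Finset.sum_congr rfl fun i _ => ?_
          rw [Finset.filter_filter]
          simp_rw [and_comm]
      _ ≤ k j := key
  · intro i j hpos
    rw [Finset.card_pos] at hpos
    obtain ⟨x, hx⟩ := hpos
    simp only [Finset.mem_filter, Finset.mem_univ, true_and] at hx
    have := hft x
    simp only [ht, Finset.mem_filter, Finset.mem_univ, true_and] at this
    rwa [hx.1, hx.2] at this


open Classical in
lemma strassen_approx {I J : Type*} [Fintype I] [Fintype J] {A B : Type*}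
    (R : A → B → Prop) (a : I → A) (b : J → B)
    (p : I → ℝ≥0) (q : J → ℝ≥0)
    (hp : ∑ i, p i = 1) (hq : ∑ j, q j = 1)
    (hall : ∀ S : Finset I, ∑ i ∈ S, p i ≤
      ∑ j ∈ Finset.univ.filter (fun j => ∃ i ∈ S, R (a i) (b j)), q j)
    (n : ℕ) :
    ∃ D : I → J → ℝ≥0, (∀ i j, ¬ R (a i) (b j) → D i j = 0) ∧
      (∀ i, ∑ j, D i j ≤ p i) ∧ (∀ j, ∑ i, D i j ≤ q j) ∧
      (1:ℝ≥0) ≤ (∑ i, ∑ j, D i j) +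
        ((Fintype.card I : ℝ≥0) + (Fintype.card J : ℝ≥0)) / (n+1) := by
  classical
  set N : ℝ≥0 := (n:ℝ≥0) + 1 with hN
  have hNpos : 0 < N := by positivity
  have hNne : N ≠ 0 := hNpos.ne'
  set m : I → ℕ := fun i => ⌊N * p i⌋₊ with hm
  set k : J → ℕ := fun j => ⌈N * q j⌉₊ with hk
  have hallnat : ∀ S : Finset I, ∑ i ∈ S, m i ≤
      ∑ j ∈ Finset.univ.filter (fun j => ∃ i ∈ S, R (a i) (b j)), k j := by
    intro S
    rw [← Nat.cast_le (α := ℝ≥0)]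
    push_cast
    calc (∑ i ∈ S, (m i : ℝ≥0)) ≤ ∑ i ∈ S, N * p i :=
          Finset.sum_le_sum fun i _ => Nat.floor_le zero_le
      _ = N * ∑ i ∈ S, p i := by rw [Finset.mul_sum]
      _ ≤ N * ∑ j ∈ Finset.univ.filter (fun j => ∃ i ∈ S, R (a i) (b j)), q j :=
          mul_le_mul_right (hall S) N
      _ = ∑ j ∈ Finset.univ.filter (fun j => ∃ i ∈ S, R (a i) (b j)), N * q j := by
          rw [Finset.mul_sum]
      _ ≤ ∑ j ∈ Finset.univ.filter (fun j => ∃ i ∈ S, R (a i) (b j)), (k j : ℝ≥0) :=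
          Finset.sum_le_sum fun j _ => Nat.le_ceil _
  obtain ⟨c, hcrow, hccol, hcsupp⟩ := strassen_nat R a b m k hallnat
  set C₀ : I → J → ℝ≥0 := fun i j => (c i j : ℝ≥0) / N with hC₀
  set s : J → ℝ≥0 := fun j => ∑ i, C₀ i j with hs
  set r : J → ℝ≥0 := fun j => if s j ≤ q j then 1 else q j / s j with hr
  have hr1 : ∀ j, r j ≤ 1 := by
    intro j
    rw [hr]
    dsimp only
    split_ifs with h
    · exact le_rfl
    · exact div_le_one_of_le₀ (not_le.1 h).le zero_le
  refine ⟨fun i j => C₀ i j * r j, ?_, ?_, ?_, ?_⟩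
  · intro i j hnR
    have : c i j = 0 := by
      by_contra hne
      exact hnR (hcsupp i j (Nat.pos_of_ne_zero hne))
    simp [hC₀, this]
  · intro i
    have hrowC₀ : ∑ j, C₀ i j = (m i : ℝ≥0) / N := by
      simp only [hC₀, ← Finset.sum_div]
      rw [← Nat.cast_sum, hcrow i]
    calc ∑ j, C₀ i j * r j ≤ ∑ j, C₀ i j * 1 :=
          Finset.sum_le_sum fun j _ => mul_le_mul_right (hr1 j) _
      _ = (m i : ℝ≥0) / N := by rw [← hrowC₀]; simp
      _ ≤ p i := by
          rw [div_le_iff₀ hNpos, mul_comm]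
          exact Nat.floor_le zero_le
  · intro j
    have : ∑ i, C₀ i j * r j = s j * r j := by rw [hs, ← Finset.sum_mul]
    rw [this, hr]
    dsimp only
    split_ifs with h
    · simpa using h
    · have hspos : s j ≠ 0 := by
        intro h0
        exact h (by simp [h0])
      rw [mul_comm, div_mul_cancel₀ _ hspos]
  · -- mass bound
    have hsle : ∀ j, s j ≤ (∑ i, C₀ i j * r j) + 1 / N := by
      intro j
      have : ∑ i, C₀ i j * r j = s j * r j := by rw [hs, ← Finset.sum_mul]
      rw [this, hr]
      dsimp only
      split_ifs with h
      · rw [mul_one]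
        exact le_self_add
      · have hDj : s j * (q j / s j) = q j := by
          have hspos : s j ≠ 0 := fun h0 => h (by simp [h0])
          rw [mul_comm, div_mul_cancel₀ _ hspos]
        rw [hDj]
        have hsk : s j ≤ (k j : ℝ≥0) / N := by
          have hseq : s j = (∑ i, (c i j : ℝ≥0)) / N := by
            rw [hs]
            simp only [hC₀]
            rw [← Finset.sum_div]
          rw [hseq]
          gcongr
          exact_mod_cast hccol j
        have hkq : (k j : ℝ≥0) ≤ N * q j + 1 := (Nat.ceil_lt_add_one zero_le).le
        calc s j ≤ (k j : ℝ≥0) / N := hsk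
          _ ≤ (N * q j + 1) / N := by gcongr
          _ = q j + 1 / N := by
              rw [add_div, mul_div_cancel_left₀ _ hNne]
    have hmass1 : (1:ℝ≥0) ≤ ∑ j, s j + (Fintype.card I : ℝ≥0) / N := by
      have h1 : N ≤ ∑ i, (m i : ℝ≥0) + (Fintype.card I : ℝ≥0) := by
        calc N = N * ∑ i, p i := by rw [hp, mul_one]
          _ = ∑ i, N * p i := by rw [Finset.mul_sum]
          _ ≤ ∑ i, ((m i : ℝ≥0) + 1) :=
              Finset.sum_le_sum fun i _ => (Nat.lt_floor_add_one _).le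
          _ = ∑ i, (m i : ℝ≥0) + (Fintype.card I : ℝ≥0) := by
              rw [Finset.sum_add_distrib]
              simp [Finset.card_univ]
      have h2 : ∑ j, s j = ∑ i, (m i : ℝ≥0) / N := by
        rw [hs]
        rw [Finset.sum_comm]
        apply Finset.sum_congr rfl
        intro i _
        simp only [hC₀, ← Finset.sum_div]
        rw [← Nat.cast_sum, hcrow i]
      rw [h2, ← Finset.sum_div, ← add_div]
      rw [one_le_div hNpos]
      exact h1
    calc (1:ℝ≥0) ≤ ∑ j, s j + (Fintype.card I : ℝ≥0) / N := hmass1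
      _ ≤ (∑ j, (∑ i, C₀ i j * r j) + (Fintype.card J : ℝ≥0) / N)
            + (Fintype.card I : ℝ≥0) / N := by
          gcongr ?_ + _
          calc ∑ j, s j ≤ ∑ j, ((∑ i, C₀ i j * r j) + 1 / N) :=
                Finset.sum_le_sum fun j _ => hsle j
            _ = ∑ j, (∑ i, C₀ i j * r j) + (Fintype.card J : ℝ≥0) / N := by
                rw [Finset.sum_add_distrib]
                simp [Finset.card_univ, Finset.sum_div, div_eq_mul_inv]
      _ = (∑ i, ∑ j, C₀ i j * r j) +
            ((Fintype.card I : ℝ≥0) + (Fintype.card J : ℝ≥0)) / N := by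
          rw [Finset.sum_comm]
          rw [add_assoc]
          congr 1
          rw [add_div, add_comm]

open Classical in
lemma strassen_exists {I J : Type*} [Fintype I] [Fintype J] {A B : Type*}
    (R : A → B → Prop) (a : I → A) (b : J → B)
    (p : I → ℝ≥0) (q : J → ℝ≥0)
    (hp : ∑ i, p i = 1) (hq : ∑ j, q j = 1)
    (hall : ∀ S : Finset I, ∑ i ∈ S, p i ≤
      ∑ j ∈ Finset.univ.filter (fun j => ∃ i ∈ S, R (a i) (b j)), q j) :
    ∃ C : I → J → ℝ≥0,
      (∀ i, ∑ j, C i j = p i) ∧ (∀ j, ∑ i, C i j = q j) ∧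
      (∀ i j, 0 < C i j → R (a i) (b j)) := by
  classical
  set 𝒞 : Set (I → J → ℝ≥0) := {C | (∀ i j, ¬ R (a i) (b j) → C i j = 0) ∧
      (∀ i, ∑ j, C i j ≤ p i) ∧ (∀ j, ∑ i, C i j ≤ q j)} with h𝒞
  have hcont_entry : ∀ (i : I) (j : J),
      Continuous (fun C : I → J → ℝ≥0 => C i j) :=
    fun i j => (continuous_apply j).comp (continuous_apply i)
  have hclosed : IsClosed 𝒞 := by
    have e1 : IsClosed {C : I → J → ℝ≥0 | ∀ i j, ¬ R (a i) (b j) → C i j = 0} := by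
      have : {C : I → J → ℝ≥0 | ∀ i j, ¬ R (a i) (b j) → C i j = 0} =
          ⋂ i, ⋂ j, {C : I → J → ℝ≥0 | ¬ R (a i) (b j) → C i j = 0} := by
        ext C; simp [Set.mem_iInter]
      rw [this]
      refine isClosed_iInter fun i => isClosed_iInter fun j => ?_
      by_cases hR : R (a i) (b j)
      · have : {C : I → J → ℝ≥0 | ¬ R (a i) (b j) → C i j = 0} = Set.univ := by
          ext C; simp [hR]
        rw [this]; exact isClosed_univ
      · have : {C : I → J → ℝ≥0 | ¬ R (a i) (b j) → C i j = 0} =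
            {C : I → J → ℝ≥0 | C i j = 0} := by
          ext C; simp [hR]
        rw [this]
        exact isClosed_eq (hcont_entry i j) continuous_const
    have e2 : IsClosed {C : I → J → ℝ≥0 | ∀ i, ∑ j, C i j ≤ p i} := by
      have : {C : I → J → ℝ≥0 | ∀ i, ∑ j, C i j ≤ p i} =
          ⋂ i, {C : I → J → ℝ≥0 | ∑ j, C i j ≤ p i} := by
        ext C; simp [Set.mem_iInter]
      rw [this]
      refine isClosed_iInter fun i => ?_
      exact isClosed_le (by continuity) continuous_const
    have e3 : IsClosed {C : I → J → ℝ≥0 | ∀ j, ∑ i, C i j ≤ q j} := by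
      have : {C : I → J → ℝ≥0 | ∀ j, ∑ i, C i j ≤ q j} =
          ⋂ j, {C : I → J → ℝ≥0 | ∑ i, C i j ≤ q j} := by
        ext C; simp [Set.mem_iInter]
      rw [this]
      refine isClosed_iInter fun j => ?_
      exact isClosed_le (by continuity) continuous_const
    have : 𝒞 = _ ∩ (_ ∩ _) := rfl
    exact (e1.inter (e2.inter e3))
  have hsubK : 𝒞 ⊆ Set.univ.pi fun _ : I => Set.univ.pi fun _ : J =>
      Set.Icc (0:ℝ≥0) 1 := by
    intro C hC
    obtain ⟨h1, h2, h3⟩ := hC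
    intro i _
    intro j _
    refine ⟨zero_le, ?_⟩
    calc C i j ≤ ∑ j', C i j' :=
          Finset.single_le_sum (fun _ _ => zero_le) (Finset.mem_univ j)
      _ ≤ p i := h2 i
      _ ≤ ∑ i', p i' := Finset.single_le_sum (fun _ _ => zero_le) (Finset.mem_univ i)
      _ = 1 := hp
  have hcomp : IsCompact 𝒞 := by
    refine IsCompact.of_isClosed_subset ?_ hclosed hsubK
    exact isCompact_univ_pi fun _ => isCompact_univ_pi fun _ => isCompact_Icc
  have hne : 𝒞.Nonempty := ⟨0, fun i j _ => rfl, fun i => by simp, fun j => by simp⟩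
  have hMcont : Continuous (fun C : I → J → ℝ≥0 => ∑ i, ∑ j, C i j) := by continuity
  obtain ⟨C, hC𝒞, hmax⟩ := hcomp.exists_isMaxOn hne hMcont.continuousOn
  obtain ⟨hCsupp, hCrow, hCcol⟩ := hC𝒞
  -- mass of C is ≥ 1
  set K : ℝ≥0 := (Fintype.card I : ℝ≥0) + (Fintype.card J : ℝ≥0) with hK
  have hMn : ∀ n : ℕ, (1:ℝ≥0) ≤ (∑ i, ∑ j, C i j) + K / (n+1) := by
    intro n
    obtain ⟨D, hD1, hD2, hD3, hD4⟩ := strassen_approx R a b p q hp hq hall n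
    have hD𝒞 : D ∈ 𝒞 := ⟨hD1, hD2, hD3⟩
    exact hD4.trans (add_le_add_left (hmax hD𝒞) _)
  have hmass_ge : (1:ℝ≥0) ≤ ∑ i, ∑ j, C i j := by
    rw [← NNReal.coe_le_coe]
    push_cast
    refine le_of_forall_pos_le_add fun ε hε => ?_
    obtain ⟨n, hn⟩ := exists_nat_gt ((K:ℝ) / ε)
    have h1 : ((K:ℝ) / (n+1)) ≤ ε := by
      rw [div_le_iff₀ (by positivity)]
      have hlt : (K:ℝ) / ε < n + 1 := hn.trans (by linarith)
      have h3 : (K:ℝ) < ((n:ℝ)+1) * ε := (div_lt_iff₀ hε).1 hlt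
      have hc : ((n:ℝ)+1) * ε = ε * ((n:ℝ)+1) := mul_comm _ _
      linarith
    have h2 := hMn n
    rw [← NNReal.coe_le_coe] at h2
    push_cast at h2
    calc (1:ℝ) ≤ (∑ i, ∑ j, (C i j : ℝ)) + (K:ℝ) / (n+1) := by convert h2 using 2 <;> push_cast <;> ring
      _ ≤ (∑ i, ∑ j, (C i j : ℝ)) + ε := by linarith
  have hmass_le : ∑ i, ∑ j, C i j ≤ 1 := by
    rw [← hp]
    exact Finset.sum_le_sum fun i _ => hCrow i
  have hmass : ∑ i, ∑ j, C i j = 1 := le_antisymm hmass_le hmass_ge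
  have hrow : ∀ i, ∑ j, C i j = p i := by
    have := (Finset.sum_eq_sum_iff_of_le (fun i _ => hCrow i)).1 (by rw [hmass, hp])
    exact fun i => this i (Finset.mem_univ i)
  have hcol : ∀ j, ∑ i, C i j = q j := by
    have hmass' : ∑ j, ∑ i, C i j = 1 := by rw [Finset.sum_comm]; exact hmass
    have := (Finset.sum_eq_sum_iff_of_le (fun j _ => hCcol j)).1 (by rw [hmass', hq])
    exact fun j => this j (Finset.mem_univ j)
  refine ⟨C, hrow, hcol, fun i j hpos => ?_⟩
  by_contra hnR
  rw [hCsupp i j hnR] at hpos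
  exact lt_irrefl 0 hpos

open Classical in
theorem strassen {I J : Type*} [Fintype I] [Fintype J] {A B : Type*}
    (R : A → B → Prop) (a : I → A) (b : J → B)
    (p : I → ℝ≥0) (q : J → ℝ≥0)
    (hp : ∑ i, p i = 1) (hq : ∑ j, q j = 1) :
    (∃ C : I → J → ℝ≥0,
      (∀ i, ∑ j, C i j = p i) ∧ (∀ j, ∑ i, C i j = q j) ∧
      (∀ i j, 0 < C i j → R (a i) (b j))) ↔
    (∀ S : Finset I, ∑ i ∈ S, p i ≤
      ∑ j ∈ Finset.univ.filter (fun j => ∃ i ∈ S, R (a i) (b j)), q j) := by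
  classical
  constructor
  · rintro ⟨C, hrow, hcol, hsupp⟩ S
    set NS := Finset.univ.filter (fun j => ∃ i ∈ S, R (a i) (b j)) with hNS
    calc ∑ i ∈ S, p i = ∑ i ∈ S, ∑ j, C i j := by
          exact Finset.sum_congr rfl fun i _ => (hrow i).symm
      _ = ∑ j, ∑ i ∈ S, C i j := Finset.sum_comm
      _ = ∑ j ∈ NS, ∑ i ∈ S, C i j := by
          rw [← Finset.sum_filter_add_sum_filter_not univ
            (fun j => ∃ i ∈ S, R (a i) (b j)) (fun j => ∑ i ∈ S, C i j)]
          have h0 : ∑ j ∈ univ.filter (fun j => ¬ ∃ i ∈ S, R (a i) (b j)),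
              ∑ i ∈ S, C i j = 0 := by
            apply Finset.sum_eq_zero
            intro j hj
            simp only [Finset.mem_filter, Finset.mem_univ, true_and] at hj
            apply Finset.sum_eq_zero
            intro i hi
            by_contra hne
            exact hj ⟨i, hi, hsupp i j (pos_iff_ne_zero.2 hne)⟩
          rw [h0, add_zero]
      _ ≤ ∑ j ∈ NS, ∑ i, C i j := Finset.sum_le_sum fun j _ =>
          Finset.sum_le_sum_of_subset (Finset.subset_univ S)
      _ = ∑ j ∈ NS, q j := Finset.sum_congr rfl fun j _ => hcol j
  · intro hall
    exact strassen_exists R a b p q hp hq hall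
end
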